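/- Let X be a compact metric space, T : X → X a homeomorphism, W a finite set, R a surjective relation on W, and φ : X → W a continuous map. Then the set of homeomorphisms H[φ, R] = {T ∈ H(X) : (φ × φ)(graph of T) = R} is a clopen subset of the homeomorphism group H(X) with the uniform convergence topology. -/

import Mathlib

/-- A relation `R ⊆ W × W` is surjective when both coordinate projections
restricted to `R` are onto `W`. -/
def IsSurjRel {W : Type*} (R : Set (W × W)) : Prop :=
  (∀ a : W, ∃ b : W, (a, b) ∈ R) ∧ (∀ b : W, ∃ a : W, (a, b) ∈ R)

/-- The topology of uniform convergence on the homeomorphism group of a compact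
metric space, obtained from the compact-open topology on `C(X, X)` (with which it
agrees) via the embedding `T ↦ (T, T⁻¹)`. -/
def homeoTop (X : Type*) [TopologicalSpace X] : TopologicalSpace (X ≃ₜ X) :=
  TopologicalSpace.induced
    (fun T : X ≃ₜ X => ((T : C(X, X)), (T.symm : C(X, X)))) inferInstance

/-- If `X` is compact and `W` finite discrete, then `C(X, W)` is discrete. -/
lemma discrete_CXW {X : Type*} [TopologicalSpace X] [CompactSpace X]
    {W : Type*} [Finite W] [TopologicalSpace W] [DiscreteTopology W] :
    DiscreteTopology C(X, W) := by
  rw [discreteTopology_iff_isOpen_singleton]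
  intro g
  have : ({g} : Set C(X, W)) = ⋂ w : W, {f : C(X, W) | Set.MapsTo f (g ⁻¹' {w}) {w}} := by
    ext f
    simp only [Set.mem_singleton_iff, Set.mem_iInter, Set.mem_setOf_eq]
    constructor
    · rintro rfl w x hx; exact hx
    · intro h
      ext x
      exact h (g x) (by simp)
  rw [this]
  exact isOpen_iInter_of_finite fun w =>
    ContinuousMap.isOpen_setOf_mapsTo
      ((isClosed_singleton.preimage g.continuous).isCompact) (isOpen_discrete _)

theorem stmt_7 {X : Type*} [MetricSpace X] [CompactSpace X]
    {W : Type*} [Finite W] [TopologicalSpace W] [DiscreteTopology W]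
    (R : Set (W × W)) (hR : IsSurjRel R) (φ : X → W) (hφ : Continuous φ) :
    @IsClopen (X ≃ₜ X) (homeoTop X)
      {T : X ≃ₜ X | Set.range (fun x : X => (φ x, φ (T x))) = R} := by
  letI := homeoTop X
  haveI : DiscreteTopology C(X, W) := discrete_CXW
  have h1 : Continuous (fun T : X ≃ₜ X => (T : C(X, X))) :=
    (continuous_induced_dom (f := fun T : X ≃ₜ X => ((T : C(X, X)), (T.symm : C(X, X)))) (t := instTopologicalSpaceProd)).fst
  have hψ : Continuous (fun T : X ≃ₜ X => (⟨φ, hφ⟩ : C(X, W)).comp (T : C(X, X))) :=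
    (ContinuousMap.continuous_postcomp _).comp h1
  have hset : {T : X ≃ₜ X | Set.range (fun x : X => (φ x, φ (T x))) = R} =
      (fun T : X ≃ₜ X => (⟨φ, hφ⟩ : C(X, W)).comp (T : C(X, X))) ⁻¹'
        {h : C(X, W) | Set.range (fun x : X => (φ x, h x)) = R} := rfl
  rw [hset]
  exact (isClopen_discrete _).preimage hψ
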